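/- If (X,T) is a weakly mixing M-system, then (K(X), T_K) is an M-system. -/

import Mathlib

open MeasureTheory Topology Set Function TopologicalSpace

noncomputable section

namespace Paper

/-- The orbit closure of a point. -/
def orbitClosure {α : Type*} [TopologicalSpace α] (T : α → α) (x : α) : Set α :=
  closure (Set.range fun n : ℕ => T^[n] x)

/-- Topological transitivity: `N(U,V)` is infinite for all non-empty open `U, V`. -/
def IsTransitive {α : Type*} [TopologicalSpace α] (T : α → α) : Prop :=
  ∀ U V : Set α, IsOpen U → U.Nonempty → IsOpen V → V.Nonempty →
    {n : ℕ | (U ∩ T^[n] ⁻¹' V).Nonempty}.Infinite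

/-- Weak mixing: the product system is transitive. -/
def IsWeaklyMixing {α : Type*} [TopologicalSpace α] (T : α → α) : Prop :=
  IsTransitive (Prod.map T T)

/-- Total transitivity. -/
def IsTotallyTransitive {α : Type*} [TopologicalSpace α] (T : α → α) : Prop :=
  ∀ n : ℕ, 0 < n → IsTransitive (T^[n])

/-- A minimal point: its orbit closure is a minimal subsystem. -/
def IsMinimalPoint {α : Type*} [TopologicalSpace α] (T : α → α) (x : α) : Prop :=
  ∀ Y : Set α, Y.Nonempty → IsClosed Y → MapsTo T Y Y → Y ⊆ orbitClosure T x →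
    Y = orbitClosure T x

def IsPeriodicPoint {α : Type*} (T : α → α) (x : α) : Prop :=
  ∃ n : ℕ, 0 < n ∧ T^[n] x = x

def IsPeriodicSystem {α : Type*} (T : α → α) : Prop :=
  ∃ m : ℕ, 0 < m ∧ T^[m] = id

def IsPointwisePeriodic {α : Type*} (T : α → α) : Prop :=
  ∀ x : α, IsPeriodicPoint T x

def IsMSystem {α : Type*} [TopologicalSpace α] (T : α → α) : Prop :=
  IsTransitive T ∧ Dense {x : α | IsMinimalPoint T x}

def IsPSystem {α : Type*} [TopologicalSpace α] (T : α → α) : Prop :=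
  IsTransitive T ∧ Dense {x : α | IsPeriodicPoint T x}

/-- An E-system: transitive with an invariant (Borel) probability measure of full support. -/
def IsESystem {α : Type*} [TopologicalSpace α] (T : α → α) : Prop :=
  IsTransitive T ∧
    let _i : MeasurableSpace α := borel α
    ∃ μ : Measure α, IsProbabilityMeasure μ ∧ μ.map T = μ ∧
      ∀ U : Set α, IsOpen U → U.Nonempty → 0 < μ U

/-- A proximal pair: the orbit closure of `(x, y)` meets the diagonal. -/
def IsProximalPair {α : Type*} [TopologicalSpace α] (T : α → α) (x y : α) : Prop :=
  ∃ z : α, (z, z) ∈ closure (Set.range fun n : ℕ => (T^[n] x, T^[n] y))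

def IsDistalPoint {α : Type*} [TopologicalSpace α] (T : α → α) (x : α) : Prop :=
  ∀ y ∈ orbitClosure T x, IsProximalPair T x y → y = x

def IsDistalSystem {α : Type*} [TopologicalSpace α] (T : α → α) : Prop :=
  ∀ x y : α, IsProximalPair T x y → x = y

/-- The induced map on the hyperspace of non-empty compact (= closed) subsets. -/
def TK {α : Type*} [TopologicalSpace α] (T : α → α) (hT : Continuous T)
    (C : NonemptyCompacts α) : NonemptyCompacts α :=
  ⟨⟨T '' (C : Set α), C.isCompact.image hT⟩, C.nonempty.image T⟩

/-- The induced map on the space of Borel probability measures. -/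
def TM {α : Type*} [TopologicalSpace α] [MeasurableSpace α] [BorelSpace α] (T : α → α)
    (hT : Continuous T) (μ : ProbabilityMeasure α) : ProbabilityMeasure α :=
  μ.map hT.measurable.aemeasurable

/-- Almost dense periodic sets. -/
def AlmostDensePeriodicSets {α : Type*} [TopologicalSpace α] (T : α → α) : Prop :=
  let _i : MeasurableSpace α := borel α
  ∀ U : Set α, IsOpen U → U.Nonempty → ∀ ε : ℝ, 0 < ε →
    ∃ k : ℕ, 0 < k ∧ ∃ μ : Measure α, IsProbabilityMeasure μ ∧ μ.map (T^[k]) = μ ∧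
      μ Uᶜ < ENNReal.ofReal ε

def IsAlmostHYSystem {α : Type*} [TopologicalSpace α] (T : α → α) : Prop :=
  IsTotallyTransitive T ∧ AlmostDensePeriodicSets T

def IsFactorMap {α β : Type*} [TopologicalSpace α] [TopologicalSpace β]
    (T : α → α) (S : β → β) (π : α → β) : Prop :=
  Continuous π ∧ Surjective π ∧ π ∘ T = S ∘ π

def IsJoining {α β : Type*} [TopologicalSpace α] [TopologicalSpace β]
    (T : α → α) (S : β → β) (J : Set (α × β)) : Prop :=
  J.Nonempty ∧ IsClosed J ∧ MapsTo (Prod.map T S) J J ∧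
    Prod.fst '' J = Set.univ ∧ Prod.snd '' J = Set.univ

def AreDisjoint {α β : Type*} [TopologicalSpace α] [TopologicalSpace β]
    (T : α → α) (S : β → β) : Prop :=
  ∀ J : Set (α × β), IsJoining T S J → J = Set.univ

def IsMinimalSystem {β : Type*} [TopologicalSpace β] (S : β → β) : Prop :=
  ∀ Y : Set β, Y.Nonempty → IsClosed Y → MapsTo S Y Y → Y = Set.univ

/-- Disjoint from every minimal system (on a compact metric space). -/
def DisjointFromAllMinimal {α : Type*} [TopologicalSpace α] (T : α → α) : Prop :=
  ∀ (β : Type) (_ : MetricSpace β) (_ : CompactSpace β) (S : β → β),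
    Continuous S → Surjective S → IsMinimalSystem S → AreDisjoint T S


/-! ### Auxiliary lemmas -/

theorem mapsTo_orbitClosure' {α : Type*} [TopologicalSpace α] {T : α → α} (hT : Continuous T)
    (x : α) : MapsTo T (orbitClosure T x) (orbitClosure T x) := by
  intro y hy
  have h1 : T '' (Set.range fun n : ℕ => T^[n] x) ⊆ Set.range fun n : ℕ => T^[n] x := by
    rintro _ ⟨_, ⟨n, rfl⟩, rfl⟩
    exact ⟨n + 1, Function.iterate_succ_apply' T n x⟩
  have := (image_closure_subset_closure_image hT (s := Set.range fun n : ℕ => T^[n] x))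
  exact closure_mono h1 (this ⟨y, hy, rfl⟩)

/-- A continuous equivariant image of a minimal point is a minimal point. -/
theorem isMinimalPoint_map {α β : Type*} [TopologicalSpace α] [TopologicalSpace β]
    [CompactSpace α] [T2Space β] {T : α → α} {S : β → β} (hT : Continuous T)
    {π : α → β} (hπ : Continuous π) (hcomm : ∀ x, π (T x) = S (π x))
    {p : α} (hp : IsMinimalPoint T p) : IsMinimalPoint S (π p) := by
  have hit : ∀ (n : ℕ) (x : α), π (T^[n] x) = S^[n] (π x) := by
    intro n
    induction n with
    | zero => intro x; rfl
    | succ n ih => intro x; rw [Function.iterate_succ_apply' T, Function.iterate_succ_apply' S,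
        hcomm, ih]
  set C := orbitClosure T p with hC
  have hCcl : IsClosed C := isClosed_closure
  have hCcpt : IsCompact C := hCcl.isCompact
  have horb : orbitClosure S (π p) = π '' C := by
    have h1 : (Set.range fun n : ℕ => S^[n] (π p)) = π '' (Set.range fun n : ℕ => T^[n] p) := by
      ext y
      constructor
      · rintro ⟨n, rfl⟩; exact ⟨T^[n] p, ⟨n, rfl⟩, (hit n p)⟩
      · rintro ⟨_, ⟨n, rfl⟩, rfl⟩; exact ⟨n, (hit n p).symm⟩
    have h2 : IsClosed (π '' C) := (hCcpt.image hπ).isClosed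
    apply subset_antisymm
    · rw [orbitClosure, h1]
      exact closure_minimal (image_mono subset_closure) h2
    · rw [orbitClosure, h1]
      calc π '' C ⊆ closure (π '' (Set.range fun n : ℕ => T^[n] p)) :=
            image_closure_subset_closure_image hπ
        _ = _ := rfl
  intro Y hYne hYcl hYinv hYsub
  rw [horb] at hYsub ⊢
  have hZ : C ∩ π ⁻¹' Y = C := by
    apply hp
    · obtain ⟨y, hy⟩ := hYne
      obtain ⟨c, hc, rfl⟩ := hYsub hy
      exact ⟨c, hc, hy⟩
    · exact hCcl.inter (hYcl.preimage hπ)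
    · rintro x ⟨hxC, hxY⟩
      exact ⟨mapsTo_orbitClosure' hT p hxC, by rw [mem_preimage, hcomm]; exact hYinv hxY⟩
    · exact inter_subset_left
  apply subset_antisymm hYsub
  rintro _ ⟨c, hc, rfl⟩
  rw [← hZ] at hc
  exact hc.2

theorem wm_transitive {X : Type*} [TopologicalSpace X] [Nonempty X] {T : X → X}
    (hwm : IsWeaklyMixing T) : IsTransitive T := by
  intro U V hU hUne hV hVne
  have h := hwm (U ×ˢ (univ : Set X)) (V ×ˢ (univ : Set X)) (hU.prod isOpen_univ)
    (hUne.prod univ_nonempty) (hV.prod isOpen_univ) (hVne.prod univ_nonempty)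
  refine h.mono ?_
  rintro n ⟨⟨a, b⟩, ⟨haU, -⟩, hab⟩
  rw [mem_preimage, Prod.map_iterate] at hab
  exact ⟨a, haU, hab.1⟩

/-- Furstenberg intersection lemma. -/
theorem furstenberg_fin {X : Type*} [TopologicalSpace X] [Nonempty X] {T : X → X}
    (hT : Continuous T) (hwm : IsWeaklyMixing T) :
    ∀ (n : ℕ) (U V : Fin n → Set X), (∀ i, IsOpen (U i)) → (∀ i, (U i).Nonempty) →
      (∀ i, IsOpen (V i)) → (∀ i, (V i).Nonempty) →
      ∃ W W' : Set X, IsOpen W ∧ W.Nonempty ∧ IsOpen W' ∧ W'.Nonempty ∧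
        ∀ m x, x ∈ W → T^[m] x ∈ W' → ∀ i, ∃ y ∈ U i, T^[m] y ∈ V i := by
  intro n
  induction n with
  | zero =>
    intro U V _ _ _ _
    exact ⟨univ, univ, isOpen_univ, univ_nonempty, isOpen_univ, univ_nonempty,
      fun m x _ _ i => i.elim0⟩
  | succ n ih =>
    intro U V hUo hUne hVo hVne
    obtain ⟨W, W', hWo, hWne, hW'o, hW'ne, hprop⟩ :=
      ih (U ∘ Fin.succ) (V ∘ Fin.succ) (fun i => hUo _) (fun i => hUne _)
        (fun i => hVo _) (fun i => hVne _)
    have h := hwm (W ×ˢ W') ((U 0) ×ˢ (V 0)) (hWo.prod hW'o) (hWne.prod hW'ne)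
      ((hUo 0).prod (hVo 0)) ((hUne 0).prod (hVne 0))
    obtain ⟨j, ⟨⟨a, b⟩, ⟨haW, hbW'⟩, hab⟩⟩ := h.nonempty
    rw [mem_preimage, Prod.map_iterate] at hab
    obtain ⟨haU, hbV⟩ := hab
    refine ⟨W ∩ T^[j] ⁻¹' (U 0), W' ∩ T^[j] ⁻¹' (V 0),
      hWo.inter ((hUo 0).preimage (hT.iterate j)), ⟨a, haW, haU⟩,
      hW'o.inter ((hVo 0).preimage (hT.iterate j)), ⟨b, hbW', hbV⟩, ?_⟩
    rintro m x ⟨hxW, hxU⟩ ⟨hxW', hxV⟩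
    intro i
    refine Fin.cases ?_ ?_ i
    · refine ⟨T^[j] x, hxU, ?_⟩
      have : T^[m] (T^[j] x) = T^[j] (T^[m] x) := by
        rw [← Function.iterate_add_apply, Nat.add_comm, Function.iterate_add_apply]
      rw [this]
      exact hxV
    · intro i
      exact hprop m x hxW hxW' i

/-- The set of common hitting times for finitely many pairs of opens is infinite
when `T` is weakly mixing. -/
theorem wm_hit_infinite {X : Type*} [TopologicalSpace X] [Nonempty X] {T : X → X}
    (hT : Continuous T) (hwm : IsWeaklyMixing T) {ι : Type*} [Fintype ι]
    (U V : ι → Set X) (hUo : ∀ i, IsOpen (U i)) (hUne : ∀ i, (U i).Nonempty)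
    (hVo : ∀ i, IsOpen (V i)) (hVne : ∀ i, (V i).Nonempty) :
    {m : ℕ | ∀ i, ∃ y ∈ U i, T^[m] y ∈ V i}.Infinite := by
  let e := Fintype.equivFin ι
  obtain ⟨W, W', hWo, hWne, hW'o, hW'ne, hprop⟩ :=
    furstenberg_fin hT hwm (Fintype.card ι) (U ∘ e.symm) (V ∘ e.symm)
      (fun i => hUo _) (fun i => hUne _) (fun i => hVo _) (fun i => hVne _)
  have htr := wm_transitive hwm W W' hWo hWne hW'o hW'ne
  refine htr.mono ?_
  rintro m ⟨x, hxW, hxW'⟩ i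
  have := hprop m x hxW hxW' (e i)
  simpa using this

theorem chain {X : Type*} [TopologicalSpace X] [Nonempty X] {T : X → X} (hT : Continuous T)
    (htr : IsTransitive T) :
    ∀ (n : ℕ) (U : Fin n → Set X), (∀ i, IsOpen (U i)) → (∀ i, (U i).Nonempty) →
      ∃ (V : Set X) (k : Fin n → ℕ), IsOpen V ∧ V.Nonempty ∧
        ∀ x ∈ V, ∀ i, T^[k i] x ∈ U i := by
  intro n
  induction n with
  | zero =>
    intro U _ _
    exact ⟨univ, fun _ => 0, isOpen_univ, univ_nonempty, fun x _ i => i.elim0⟩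
  | succ n ih =>
    intro U hUo hUne
    obtain ⟨V', k', hV'o, hV'ne, hk'⟩ := ih (U ∘ Fin.succ) (fun i => hUo _) (fun i => hUne _)
    obtain ⟨m, ⟨a, haU, haV'⟩⟩ := (htr (U 0) V' (hUo 0) (hUne 0) hV'o hV'ne).nonempty
    refine ⟨U 0 ∩ T^[m] ⁻¹' V', Fin.cases 0 (fun i => k' i + m),
      (hUo 0).inter (hV'o.preimage (hT.iterate m)), ⟨a, haU, haV'⟩, ?_⟩
    rintro x ⟨hxU, hxV'⟩ i
    refine Fin.cases ?_ ?_ i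
    · exact hxU
    · intro i
      simp only [Fin.cases_succ]
      rw [Function.iterate_add_apply]
      exact hk' _ hxV' i

theorem TK_iterate_coe {α : Type*} [TopologicalSpace α] (T : α → α) (hT : Continuous T)
    (n : ℕ) (C : NonemptyCompacts α) :
    (((TK T hT)^[n] C : NonemptyCompacts α) : Set α) = T^[n] '' (C : Set α) := by
  induction n with
  | zero => simp
  | succ n ih =>
    rw [Function.iterate_succ_apply' (TK T hT), Function.iterate_succ' T]
    show T '' (((TK T hT)^[n] C : NonemptyCompacts α) : Set α) = _
    rw [ih, Set.image_image]
    rfl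

/-- The compact set consisting of the values `g i x` for `i` in a finite index type. -/
def finOrb {X : Type*} [MetricSpace X] {ι : Type*} [Fintype ι] [Nonempty ι]
    (g : ι → X → X) (x : X) : NonemptyCompacts X :=
  ⟨⟨Set.range fun i => g i x, (Set.finite_range _).isCompact⟩, Set.range_nonempty _⟩

theorem dist_ranges_le {X : Type*} [MetricSpace X] {ι : Type*} [Fintype ι] [Nonempty ι]
    (f g : ι → X) {r : ℝ} (hr : 0 ≤ r) (h : ∀ i, dist (f i) (g i) ≤ r)
    (F G : NonemptyCompacts X) (hF : (F : Set X) = Set.range f)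
    (hG : (G : Set X) = Set.range g) : dist F G ≤ r := by
  rw [Metric.NonemptyCompacts.dist_eq, hF, hG]
  apply Metric.hausdorffDist_le_of_mem_dist hr
  · rintro _ ⟨i, rfl⟩; exact ⟨g i, ⟨i, rfl⟩, h i⟩
  · rintro _ ⟨i, rfl⟩; exact ⟨f i, ⟨i, rfl⟩, (dist_comm (f i) (g i) ▸ h i)⟩

theorem finOrb_continuous {X : Type*} [MetricSpace X] {ι : Type*} [Fintype ι] [Nonempty ι]
    (g : ι → X → X) (hg : ∀ i, Continuous (g i)) : Continuous (finOrb g) := by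
  rw [Metric.continuous_iff]
  intro x ε hε
  have h : ∀ i : ι, ∃ δ > 0, ∀ a, dist a x < δ → dist (g i a) (g i x) < ε / 2 := by
    intro i
    exact Metric.continuous_iff.1 (hg i) x (ε / 2) (by linarith)
  choose δ hδpos hδ using h
  refine ⟨Finset.univ.inf' Finset.univ_nonempty δ, ?_, ?_⟩
  · exact (Finset.lt_inf'_iff _).2 fun i _ => hδpos i
  · intro a ha
    have hle : dist (finOrb g a) (finOrb g x) ≤ ε / 2 := by
      apply dist_ranges_le (fun i => g i a) (fun i => g i x) (by linarith)
        (fun i => (hδ i a (lt_of_lt_of_le ha (Finset.inf'_le δ (Finset.mem_univ i)))).le)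
        _ _ rfl rfl
    linarith

/-- A finite `ε`-net inside a nonempty compact set. -/
theorem exists_net {X : Type*} [MetricSpace X] {s : Set X} (hs : IsCompact s)
    (hne : s.Nonempty) {ε : ℝ} (hε : 0 < ε) :
    ∃ (n : ℕ) (f : Fin n → X), Nonempty (Fin n) ∧ (∀ i, f i ∈ s) ∧
      ∀ x ∈ s, ∃ i, dist x (f i) < ε := by
  obtain ⟨t, hts, htfin, htcov⟩ := totallyBounded_iff_subset.1 hs.totallyBounded
    {p : X × X | dist p.1 p.2 < ε} (Metric.dist_mem_uniformity hε)
  obtain ⟨n, f, hf⟩ := htfin.fin_embedding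
  have htne : t.Nonempty := by
    obtain ⟨x, hx⟩ := hne
    obtain ⟨y, hy, -⟩ := mem_iUnion₂.1 (htcov hx)
    exact ⟨y, hy⟩
  refine ⟨n, f, ?_, ?_, ?_⟩
  · rw [← hf] at htne
    exact Set.range_nonempty_iff_nonempty.1 htne
  · intro i
    exact hts (hf ▸ Set.mem_range_self i)
  · intro x hx
    obtain ⟨y, hy, hxy⟩ := mem_iUnion₂.1 (htcov hx)
    rw [← hf] at hy
    obtain ⟨i, rfl⟩ := hy
    exact ⟨i, hxy⟩

theorem wm_Msystem_implies_hyperspace_Msystem {X : Type*} [MetricSpace X] [CompactSpace X]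
    (T : X → X) (hT : Continuous T) (hTs : Surjective T)
    (hwm : IsWeaklyMixing T) (hM : IsMSystem T) :
    IsMSystem (TK T hT) := by
  by_cases hX : Nonempty X
  case neg =>
    haveI hE : IsEmpty (NonemptyCompacts X) := ⟨fun C => hX ⟨C.nonempty.choose⟩⟩
    constructor
    · intro U V _ hUne _ _
      obtain ⟨C, -⟩ := hUne
      exact (hE.false C).elim
    · exact fun C => (hE.false C).elim
  case pos =>
  constructor
  · -- transitivity of the induced hyperspace map
    intro O O' hO hOne hO' hO'ne
    obtain ⟨K, hK⟩ := hOne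
    obtain ⟨ε, hε, hball⟩ := Metric.isOpen_iff.1 hO K hK
    obtain ⟨K', hK'⟩ := hO'ne
    obtain ⟨δ, hδ, hball'⟩ := Metric.isOpen_iff.1 hO' K' hK'
    obtain ⟨n, f, hfn, hfmem, hfcov⟩ := exists_net K.isCompact K.nonempty
      (show (0:ℝ) < ε / 3 by linarith)
    obtain ⟨m, g, hgn, hgmem, hgcov⟩ := exists_net K'.isCompact K'.nonempty
      (show (0:ℝ) < δ / 3 by linarith)
    haveI := hfn
    haveI := hgn
    have hinf := wm_hit_infinite hT hwm (ι := Fin n × Fin m)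
      (fun p => Metric.ball (f p.1) (ε / 3)) (fun p => Metric.ball (g p.2) (δ / 3))
      (fun p => Metric.isOpen_ball) (fun p => ⟨f p.1, Metric.mem_ball_self (by linarith)⟩)
      (fun p => Metric.isOpen_ball) (fun p => ⟨g p.2, Metric.mem_ball_self (by linarith)⟩)
    refine hinf.mono ?_
    intro N hN
    choose c hc1 hc2 using hN
    set C : NonemptyCompacts X :=
      ⟨⟨Set.range c, (Set.finite_range c).isCompact⟩, Set.range_nonempty c⟩ with hCdef
    have hCcoe : (C : Set X) = Set.range c := rfl
    have hdistC : dist C K ≤ 2 * ε / 3 := by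
      rw [Metric.NonemptyCompacts.dist_eq]
      apply Metric.hausdorffDist_le_of_mem_dist (by linarith)
      · rintro _ ⟨p, rfl⟩
        exact ⟨f p.1, hfmem p.1, by
          have := Metric.mem_ball.1 (hc1 p); linarith⟩
      · intro y hy
        obtain ⟨i, hi⟩ := hfcov y hy
        obtain ⟨j⟩ := hgn
        refine ⟨c (i, j), Set.mem_range_self _, ?_⟩
        have h1 := Metric.mem_ball.1 (hc1 (i, j))
        calc dist y (c (i, j)) ≤ dist y (f i) + dist (f i) (c (i, j)) := dist_triangle _ _ _
          _ ≤ ε / 3 + ε / 3 := by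
              rw [dist_comm (f i)]
              exact add_le_add hi.le h1.le
          _ ≤ 2 * ε / 3 := by linarith
    have hdistC' : dist ((TK T hT)^[N] C) K' ≤ 2 * δ / 3 := by
      rw [Metric.NonemptyCompacts.dist_eq, TK_iterate_coe]
      apply Metric.hausdorffDist_le_of_mem_dist (by linarith)
      · rintro _ ⟨x, hx, rfl⟩
        rw [hCcoe] at hx
        obtain ⟨p, rfl⟩ := hx
        exact ⟨g p.2, hgmem p.2, by
          have := Metric.mem_ball.1 (hc2 p); linarith⟩
      · intro y hy
        obtain ⟨j, hj⟩ := hgcov y hy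
        obtain ⟨i⟩ := hfn
        refine ⟨T^[N] (c (i, j)), ⟨c (i, j), by rw [hCcoe]; exact Set.mem_range_self _, rfl⟩, ?_⟩
        have h1 := Metric.mem_ball.1 (hc2 (i, j))
        calc dist y (T^[N] (c (i, j)))
            ≤ dist y (g j) + dist (g j) (T^[N] (c (i, j))) := dist_triangle _ _ _
          _ ≤ δ / 3 + δ / 3 := by
              rw [dist_comm (g j)]
              exact add_le_add hj.le h1.le
          _ ≤ 2 * δ / 3 := by linarith
    refine ⟨C, hball (Metric.mem_ball.2 (by linarith)), ?_⟩
    rw [mem_preimage]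
    exact hball' (Metric.mem_ball.2 (by linarith))
  · -- density of minimal points
    rw [dense_iff_inter_open]
    intro O hO hOne
    obtain ⟨K, hK⟩ := hOne
    obtain ⟨ε, hε, hball⟩ := Metric.isOpen_iff.1 hO K hK
    obtain ⟨n, f, hfn, hfmem, hfcov⟩ := exists_net K.isCompact K.nonempty
      (show (0:ℝ) < ε / 3 by linarith)
    haveI := hfn
    obtain ⟨V, k, hVo, hVne, hk⟩ := chain hT hM.1 n (fun i => Metric.ball (f i) (ε / 3))
      (fun i => Metric.isOpen_ball) (fun i => ⟨f i, Metric.mem_ball_self (by linarith)⟩)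
    obtain ⟨z, hzV, hzmin⟩ := (dense_iff_inter_open.1 hM.2 V hVo hVne)
    set ψ : X → NonemptyCompacts X := finOrb (fun i x => T^[k i] x) with hψ
    have hψcont : Continuous ψ := finOrb_continuous _ (fun i => hT.iterate (k i))
    have hψcomm : ∀ x, ψ (T x) = TK T hT (ψ x) := by
      intro x
      apply NonemptyCompacts.ext
      show (Set.range fun i => T^[k i] (T x)) = T '' Set.range fun i => T^[k i] x
      rw [← Set.range_comp]
      have heq : (fun i => T^[k i] (T x)) = (T ∘ fun i => T^[k i] x) := by
        funext i
        show T^[k i] (T x) = T (T^[k i] x)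
        rw [← Function.iterate_succ_apply, Function.iterate_succ_apply']
      rw [heq]
    have hmin : IsMinimalPoint (TK T hT) (ψ z) :=
      isMinimalPoint_map hT hψcont hψcomm hzmin
    refine ⟨ψ z, hball (Metric.mem_ball.2 ?_), hmin⟩
    have hdist : dist (ψ z) K ≤ 2 * ε / 3 := by
      rw [Metric.NonemptyCompacts.dist_eq]
      apply Metric.hausdorffDist_le_of_mem_dist (by linarith)
      · rintro _ ⟨i, rfl⟩
        refine ⟨f i, hfmem i, ?_⟩
        have := Metric.mem_ball.1 (hk z hzV i)
        linarith
      · intro y hy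
        obtain ⟨i, hi⟩ := hfcov y hy
        refine ⟨T^[k i] z, Set.mem_range_self i, ?_⟩
        have h1 := Metric.mem_ball.1 (hk z hzV i)
        calc dist y (T^[k i] z) ≤ dist y (f i) + dist (f i) (T^[k i] z) := dist_triangle _ _ _
          _ ≤ ε / 3 + ε / 3 := by
              rw [dist_comm (f i)]
              exact add_le_add hi.le h1.le
          _ ≤ 2 * ε / 3 := by linarith
    linarith


end Paper
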